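/- arXiv:2204.11653 — 2 statements merged into one kernel-verified Lean document; each statement's English description precedes it below -/
import Mathlib

section
/- Let F be a field, let m, c, k be positive integers, let M be an m × c matrix over F, let c₀ be a column index, and let α : Fin k → F be injective with α(j) ≠ 0 for all j. Suppose p_1, …, p_c are polynomials over F, each of degree strictly less than k, such that p_l(0) = 1 if l = c₀ and p_l(0) = 0 otherwise. For each j define the share vector s_j := (p_1(α(j)), …, p_c(α(j))) ∈ F^c and the answer a_j := M · s_j ∈ F^m. Then ∑_{j=0}^{k−1} (∏_{i ≠ j} α(i)/(α(i) − α(j))) · a_j equals the c₀-th column of M, i.e. the vector (M(r, c₀))_{r}. -/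
open Polynomial Finset

lemma lagrange_eval_zero {F : Type*} [Field F] {k : ℕ} (α : Fin k → F)
    (hinj : Function.Injective α) (q : Polynomial F) (hdeg : q.degree < (k : ℕ)) :
    ∑ j : Fin k, (∏ i ∈ Finset.univ.erase j, α i / (α i - α j)) * q.eval (α j)
      = q.eval 0 := by
  have hcard : (#(Finset.univ : Finset (Fin k)) : WithBot ℕ) = (k : ℕ) := by simp
  have h := Lagrange.eq_interpolate (s := Finset.univ) (v := α)
    (hinj.injOn) (f := q) (by rw [hcard]; exact hdeg)
  conv_rhs => rw [h]
  rw [Lagrange.interpolate_apply, eval_finset_sum]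
  refine Finset.sum_congr rfl fun j _ => ?_
  rw [eval_mul, eval_C, mul_comm]
  congr 1
  rw [Lagrange.basis, eval_prod]
  refine Finset.prod_congr rfl fun i hi => ?_
  have hij : α j ≠ α i := fun h' => (Finset.mem_erase.mp hi).1 (hinj h').symm
  rw [Lagrange.basisDivisor, eval_mul, eval_C, eval_sub, eval_X, eval_C, zero_sub,
    div_eq_iff (sub_ne_zero.mpr (fun h' => hij h'.symm))]
  field_simp [sub_ne_zero.mpr hij]
  ring

/-- Correctness of the Shamir-secret-sharing PIR protocol: with database
`M : Matrix (Fin m) (Fin c) F`, desired column `c₀`, injective nonzero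
evaluation points `α : Fin k → F`, and secret-sharing polynomials
`p l` of degree `< k` with `p l (0) = 1` iff `l = c₀` (and `0` otherwise),
the Lagrange combination at `0` of the answers `a j = M · s j`,
where `s j = (p l (α j))_l`, recovers the `c₀`-th column of `M`. -/
theorem shamir_pir_correctness {F : Type*} [Field F]
    (m c k : ℕ) (hm : 1 ≤ m) (hc : 1 ≤ c) (hk : 1 ≤ k)
    (M : Matrix (Fin m) (Fin c) F) (c₀ : Fin c)
    (α : Fin k → F) (hinj : Function.Injective α) (hα : ∀ j, α j ≠ 0)
    (p : Fin c → Polynomial F) (hdeg : ∀ l, (p l).degree < (k : ℕ))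
    (hconst : ∀ l, (p l).eval 0 = if l = c₀ then 1 else 0)
    (s : Fin k → Fin c → F) (hs : ∀ j l, s j l = (p l).eval (α j))
    (a : Fin k → Fin m → F) (ha : ∀ j, a j = M.mulVec (s j)) :
    (∑ j : Fin k,
        (∏ i ∈ Finset.univ.erase j, α i / (α i - α j)) • a j) =
      fun r : Fin m => M r c₀ := by
  funext r
  simp only [Finset.sum_apply, Pi.smul_apply, smul_eq_mul, ha, Matrix.mulVec,
    dotProduct, hs]
  simp_rw [Finset.mul_sum]
  rw [Finset.sum_comm]
  have key : ∀ l : Fin c, ∑ j : Fin k,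
      (∏ i ∈ Finset.univ.erase j, α i / (α i - α j)) * (M r l * (p l).eval (α j))
        = M r l * (p l).eval 0 := by
    intro l
    rw [← lagrange_eval_zero α hinj (p l) (hdeg l), Finset.mul_sum]
    exact Finset.sum_congr rfl fun j _ => by ring
  simp_rw [key, hconst, mul_ite, mul_one, mul_zero, Finset.sum_ite_eq',
    Finset.mem_univ, if_true]
end

section
/- Let F be a finite field, let k ≥ 1 and t ≥ 1, let α : Fin k → F be injective with α(j) ≠ 0 for all j, let S be a subset of Fin k with |S| ≤ t, and let s ∈ F. If the coefficient vector (c_1, …, c_t) is drawn uniformly at random from F^t and p(X) = s + c_1·X + ⋯ + c_t·X^t, then the tuple of shares (p(α(j)))_{j ∈ S} is uniformly distributed on F^S; that is, the pushforward of the uniform distribution on F^t under the map (c_1, …, c_t) ↦ (p(α(j)))_{j ∈ S} is the uniform distribution on the functions from S to F. -/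
open Finset
open scoped ENNReal

private lemma map_uniform_of_const_fiber {A B : Type*} [Fintype A] [Fintype B]
    [DecidableEq B] [Nonempty A] [Nonempty B] (f : A → B) (n : ℕ)
    (hn : ∀ b, (Finset.univ.filter (fun a => f a = b)).card = n) :
    PMF.map f (PMF.uniformOfFintype A) = PMF.uniformOfFintype B := by
  classical
  have hcard : Fintype.card A = Fintype.card B * n := by
    have h := Finset.card_eq_sum_card_fiberwise
      (s := (univ : Finset A)) (t := (univ : Finset B)) (f := f)
      (fun x _ => mem_univ _)
    simpa [hn, Finset.card_univ, mul_comm] using h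
  have hn0 : n ≠ 0 := by
    intro h
    have hz : Fintype.card A = 0 := by rw [hcard, h, mul_zero]
    exact Fintype.card_ne_zero hz
  ext b
  rw [PMF.map_apply, tsum_fintype]
  simp only [PMF.uniformOfFintype_apply]
  have hsum : (∑ a : A, if b = f a then ((Fintype.card A : ℝ≥0∞))⁻¹ else 0)
      = ((univ.filter (fun a => f a = b)).card : ℝ≥0∞) * (Fintype.card A : ℝ≥0∞)⁻¹ := by
    rw [← Finset.sum_filter, Finset.sum_const, nsmul_eq_mul]
    congr 2
    exact congrArg Finset.card (Finset.filter_congr (fun a _ => eq_comm))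
  rw [hsum, hn, hcard]
  have hB0 : (Fintype.card B : ℝ≥0∞) ≠ 0 := by exact_mod_cast Fintype.card_ne_zero
  have hn0' : (n : ℝ≥0∞) ≠ 0 := by exact_mod_cast hn0
  push_cast
  rw [ENNReal.mul_inv (Or.inl hB0) (Or.inl (ENNReal.natCast_ne_top _)),
    ← mul_assoc, mul_comm (n : ℝ≥0∞) _, mul_assoc,
    ENNReal.mul_inv_cancel hn0' (ENNReal.natCast_ne_top _), mul_one]

/-- `t`-privacy of Shamir secret sharing, distributionally: over a finite
field `F`, with injective nonzero evaluation points `α : Fin k → F`, a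
coalition `S ⊆ Fin k` with `|S| ≤ t`, and a fixed secret `s`, the pushforward
of the uniform distribution on coefficient vectors `F^t` under the map
`(c 1, …, c t) ↦ (p (α j))_{j ∈ S}` (where `p X = s + c 1·X + ⋯ + c t·X^t`)
is the uniform distribution on functions `S → F`. -/
theorem shamir_shares_uniform {F : Type*} [Field F] [Fintype F] [DecidableEq F]
    (k t : ℕ) (hk : 1 ≤ k) (ht : 1 ≤ t)
    (α : Fin k → F) (hinj : Function.Injective α) (hα : ∀ j, α j ≠ 0)
    (S : Finset (Fin k)) (hS : S.card ≤ t) (s : F) :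
    PMF.map
      (fun cf : Fin t → F =>
        fun j : {x : Fin k // x ∈ S} => s + ∑ i : Fin t, cf i * (α j) ^ ((i : ℕ) + 1))
      (PMF.uniformOfFintype (Fin t → F)) =
    PMF.uniformOfFintype ({x : Fin k // x ∈ S} → F) := by
  classical
  set M : Matrix {x : Fin k // x ∈ S} (Fin t) F := fun j i => (α j) ^ ((i : ℕ) + 1) with hM
  set L : (Fin t → F) →ₗ[F] ({x : Fin k // x ∈ S} → F) := Matrix.mulVecLin M with hLdef
  have hLapp : ∀ (cf : Fin t → F) (j : {x : Fin k // x ∈ S}),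
      L cf j = ∑ i : Fin t, (α j) ^ ((i : ℕ) + 1) * cf i := by
    intro cf j
    rw [hLdef, Matrix.mulVecLin_apply]
    simp [hM, Matrix.mulVec, dotProduct]
  have hinjS : Set.InjOn α S := fun x _ y _ h => hinj h
  have hLsurj : Function.Surjective L := by
    intro g
    set r : Fin k → F := fun j => if h : j ∈ S then g ⟨j, h⟩ / α j else 0 with hr
    set q := Lagrange.interpolate S α r with hq
    have hdeg : q.natDegree < t := by
      by_cases h0 : q = 0
      · rw [h0, Polynomial.natDegree_zero]; omega
      · have hd : q.degree < (S.card : ℕ) := Lagrange.degree_interpolate_lt r hinjS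
        have : q.natDegree < S.card := (Polynomial.natDegree_lt_iff_degree_lt h0).mpr hd
        omega
    refine ⟨fun i => q.coeff i, ?_⟩
    funext j
    have hev : q.eval (α j) = r j := Lagrange.eval_interpolate_at_node r hinjS j.2
    have heval : q.eval (α j) = ∑ i ∈ Finset.range t, q.coeff i * (α j) ^ i :=
      Polynomial.eval_eq_sum_range' hdeg _
    rw [hLapp]
    have : ∑ i : Fin t, (α j) ^ ((i : ℕ) + 1) * q.coeff i
        = α j * ∑ i ∈ Finset.range t, q.coeff i * (α j) ^ i := by
      rw [Finset.mul_sum, ← Fin.sum_univ_eq_sum_range]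
      congr 1
      funext i
      ring
    rw [this, ← heval, hev, hr]
    simp [j.2, mul_div_cancel₀ _ (hα j.1)]
  have hfib : ∀ b : {x : Fin k // x ∈ S} → F,
      (univ.filter (fun cf : Fin t → F =>
        (fun j : {x : Fin k // x ∈ S} => s + ∑ i : Fin t, cf i * (α j) ^ ((i : ℕ) + 1)) = b)).card
      = Fintype.card (LinearMap.ker L) := by
    intro b
    obtain ⟨x₀, hx₀⟩ := hLsurj (b - fun _ => s)
    have hiff : ∀ cf : Fin t → F,
        ((fun j : {x : Fin k // x ∈ S} => s + ∑ i : Fin t, cf i * (α j) ^ ((i : ℕ) + 1)) = b)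
        ↔ cf - x₀ ∈ LinearMap.ker L := by
      intro cf
      have hLcf : ∀ j : {x : Fin k // x ∈ S}, s + ∑ i : Fin t, cf i * (α j) ^ ((i : ℕ) + 1) = s + L cf j := by
        intro j
        rw [hLapp]
        congr 1
        exact Finset.sum_congr rfl (fun i _ => mul_comm _ _)
      constructor
      · intro h
        rw [LinearMap.mem_ker, map_sub, hx₀, sub_eq_zero]
        funext j
        have := congrFun h j
        rw [hLcf j] at this
        simp only [Pi.sub_apply]
        linear_combination this
      · intro h
        rw [LinearMap.mem_ker, map_sub, hx₀, sub_eq_zero] at h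
        funext j
        rw [hLcf j, h]
        simp
    rw [← Fintype.card_subtype]
    refine Fintype.card_congr ?_
    refine { toFun := fun x => ⟨x.1 - x₀, (hiff x.1).mp x.2⟩,
             invFun := fun z => ⟨z.1 + x₀, (hiff _).mpr (by simpa using z.2)⟩,
             left_inv := fun x => by simp,
             right_inv := fun z => by simp }
  exact map_uniform_of_const_fiber _ (Fintype.card (LinearMap.ker L)) hfib
end
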